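/- Let f : ℝⁿ → ℝ ∪ {+∞} be bounded below by f*, let x_0 ∈ ℝⁿ, and set Ω := {x : f(x) ≤ f(x_0)}. Assume f is semi-differentiable at every point of Ω and has the descent property on Ω + B (the sublevel set fattened by the closed unit ball) with constant L > 0. Let (x_k) and (w_k) satisfy x_{k+1} = x_k + α_k w_k with ‖w_k‖ ≤ 1, d_k := df(x_k)(w_k) < 0, and each α_k produced by Armijo backtracking with reduction multiple μ ∈ (0, 1): either α_k = 1 passes the test, or α_k passes while α_k/μ fails. Set M := min{1/2, μ/(2L)}. Then x_k ∈ Ω for all k, and for every N with min_{0 ≤ k ≤ N} min{|d_k|, d_k²} < 1 the bound min_{0 ≤ k ≤ N} |d_k| ≤ √((f(x_0) − f*)/(M(N + 1))) holds. -/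

import Mathlib

open Filter Topology Set

/-- The subderivative `df(x̄)(w) := liminf_{t↓0, w'→w} (f(x̄ + t w') − f(x̄))/t`
of an extended-real-valued function. -/
noncomputable def subderiv {n : ℕ} (f : EuclideanSpace ℝ (Fin n) → EReal)
    (x w : EuclideanSpace ℝ (Fin n)) : EReal :=
  Filter.liminf
    (fun p : ℝ × EuclideanSpace ℝ (Fin n) =>
      (((p.1)⁻¹ : ℝ) : EReal) * (f (x + p.1 • p.2) - f x))
    ((𝓝[>] (0:ℝ)) ×ˢ 𝓝 w)

/-- `F` is semi-differentiable at `x` for the direction `w` with semi-derivative `d`: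
`d = lim_{t↓0, w'→w} (F(x + t w') − F(x))/t`. -/
def HasSemiderivAt {E V : Type*} [NormedAddCommGroup E] [NormedSpace ℝ E]
    [NormedAddCommGroup V] [NormedSpace ℝ V]
    (F : E → V) (x w : E) (d : V) : Prop :=
  Filter.Tendsto (fun p : ℝ × E => (p.1)⁻¹ • (F (x + p.1 • p.2) - F x))
    ((𝓝[>] (0:ℝ)) ×ˢ 𝓝 w) (𝓝 d)

/-- `f` has the descent property on `Ω` with constant `L`:
`f(y) ≤ f(x) + df(x)(y − x) + (L/2)‖y − x‖²` for all `x, y ∈ Ω`. -/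
def DescentPropOn {n : ℕ} (f : EuclideanSpace ℝ (Fin n) → EReal)
    (Ω : Set (EuclideanSpace ℝ (Fin n))) (L : ℝ) : Prop :=
  ∀ x ∈ Ω, ∀ y ∈ Ω,
    f y ≤ f x + subderiv f x (y - x) + (((L / 2) * ‖y - x‖ ^ 2 : ℝ) : EReal)

private lemma ereal_lt_real {a : EReal} {rb c : ℝ} (hbot : a ≠ ⊥)
    (h : a - (rb : EReal) < (c : EReal)) :
    a ≠ ⊤ ∧ a.toReal - rb < c := by
  have htop : a ≠ ⊤ := by
    intro h'
    rw [h', EReal.top_sub_coe] at h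
    exact not_top_lt h
  refine ⟨htop, ?_⟩
  rw [← EReal.coe_toReal htop hbot, ← EReal.coe_sub, EReal.coe_lt_coe_iff] at h
  exact h

private lemma subderiv_smul {n : ℕ} (f : EuclideanSpace ℝ (Fin n) → EReal)
    (z u : EuclideanSpace ℝ (Fin n)) (dz : ℝ)
    (h1 : Filter.Tendsto (fun q : ℝ × EuclideanSpace ℝ (Fin n) =>
        (((q.1)⁻¹ : ℝ) : EReal) * (f (z + q.1 • q.2) - f z))
        ((𝓝[>] (0:ℝ)) ×ˢ 𝓝 u) (𝓝 ((dz : ℝ) : EReal)))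
    {s : ℝ} (hs : 0 < s)
    (h2 : Filter.Tendsto (fun q : ℝ × EuclideanSpace ℝ (Fin n) =>
        (((q.1)⁻¹ : ℝ) : EReal) * (f (z + q.1 • q.2) - f z))
        ((𝓝[>] (0:ℝ)) ×ˢ 𝓝 (s • u)) (𝓝 (subderiv f z (s • u)))) :
    subderiv f z (s • u) = ((s * dz : ℝ) : EReal) := by
  have ht : Tendsto (fun t : ℝ => s * t) (𝓝[>] (0:ℝ)) (𝓝[>] (0:ℝ)) := by
    apply tendsto_nhdsWithin_of_tendsto_nhds_of_eventually_within
    · have h : Tendsto (fun t : ℝ => s * t) (𝓝 (0:ℝ)) (𝓝 (0:ℝ)) := by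
        simpa using (continuous_mul_left s).tendsto (0:ℝ)
      exact h.mono_left nhdsWithin_le_nhds
    · filter_upwards [eventually_mem_nhdsWithin] with t ht
      exact mul_pos hs ht
  have hv : Tendsto (fun v : EuclideanSpace ℝ (Fin n) => s⁻¹ • v) (𝓝 (s • u)) (𝓝 u) := by
    have h := (continuous_const_smul (s⁻¹ : ℝ)).tendsto (s • u)
    rwa [inv_smul_smul₀ hs.ne'] at h
  have hΦ : Tendsto (Prod.map (fun t : ℝ => s * t)
      (fun v : EuclideanSpace ℝ (Fin n) => s⁻¹ • v))
      ((𝓝[>] (0:ℝ)) ×ˢ 𝓝 (s • u)) ((𝓝[>] (0:ℝ)) ×ˢ 𝓝 u) := Filter.Tendsto.prodMap ht hv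
  have hcomp := h1.comp hΦ
  have hmul : ContinuousAt (fun y : EReal => ((s : ℝ) : EReal) * y) ((dz : ℝ) : EReal) := by
    have h := EReal.continuousAt_mul (p := (((s : ℝ) : EReal), ((dz : ℝ) : EReal)))
      (Or.inl (EReal.coe_ne_zero.2 hs.ne')) (Or.inl (EReal.coe_ne_zero.2 hs.ne'))
      (Or.inl (EReal.coe_ne_bot s)) (Or.inl (EReal.coe_ne_top s))
    exact h.comp ((continuous_const.prodMk continuous_id).continuousAt)
  have htend := hmul.tendsto.comp hcomp
  have heq : ∀ᶠ q : ℝ × EuclideanSpace ℝ (Fin n) in (𝓝[>] (0:ℝ)) ×ˢ 𝓝 (s • u),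
      ((s : ℝ) : EReal) * ((fun q : ℝ × EuclideanSpace ℝ (Fin n) =>
        (((q.1)⁻¹ : ℝ) : EReal) * (f (z + q.1 • q.2) - f z))
        (Prod.map (fun t : ℝ => s * t) (fun v : EuclideanSpace ℝ (Fin n) => s⁻¹ • v) q))
      = (((q.1)⁻¹ : ℝ) : EReal) * (f (z + q.1 • q.2) - f z) := by
    have hev : ∀ᶠ q : ℝ × EuclideanSpace ℝ (Fin n) in (𝓝[>] (0:ℝ)) ×ˢ 𝓝 (s • u),
        q.1 ∈ Set.Ioi (0:ℝ) :=
      Filter.Eventually.prod_inl eventually_mem_nhdsWithin _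
    filter_upwards [hev] with q hq
    have harg : (s * q.1) • (s⁻¹ • q.2) = q.1 • q.2 := by
      rw [smul_smul, mul_comm s q.1, mul_assoc, mul_inv_cancel₀ hs.ne', mul_one]
    show ((s : ℝ) : EReal) * ((((s * q.1)⁻¹ : ℝ) : EReal) *
        (f (z + (s * q.1) • (s⁻¹ • q.2)) - f z)) = _
    rw [harg, ← mul_assoc, ← EReal.coe_mul]
    congr 2
    rw [mul_inv, ← mul_assoc, mul_inv_cancel₀ hs.ne', one_mul]
  have hfin : Tendsto (fun q : ℝ × EuclideanSpace ℝ (Fin n) =>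
      (((q.1)⁻¹ : ℝ) : EReal) * (f (z + q.1 • q.2) - f z))
      ((𝓝[>] (0:ℝ)) ×ˢ 𝓝 (s • u)) (𝓝 ((s * dz : ℝ) : EReal)) := by
    have h := htend.congr' heq
    rwa [EReal.coe_mul]
  exact tendsto_nhds_unique h2 hfin

open Pointwise

set_option maxHeartbeats 1000000 in
/-- convergence of the subderivative descent method.  With
`Ω = {x | f(x) ≤ f(x_0)}`, if `f` is bounded below by `f*`, semi-differentiable at every
point of `Ω`, and has the descent property on `Ω + B` with constant `L > 0`, and the
iterates `x_{k+1} = x_k + α_k w_k` use directions with `‖w_k‖ ≤ 1`,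
`d_k = df(x_k)(w_k) < 0`, and Armijo step sizes, then all iterates stay in `Ω`, and with
`M = min{1/2, μ/(2L)}`, for every `N` for which `min_{0 ≤ k ≤ N} min{|d_k|, d_k²} < 1`
one has `min_{0 ≤ k ≤ N} |d_k| ≤ √((f(x_0) − f*)/(M(N+1)))`. -/
theorem subderivative_descent_method_convergence {n : ℕ}
    (f : EuclideanSpace ℝ (Fin n) → EReal)
    -- `f` takes values in ℝ ∪ {+∞} and is bounded below by `f*`
    (hf_ne_bot : ∀ z, f z ≠ ⊥)
    (fstar : ℝ) (hbdd : ∀ z, (fstar : EReal) ≤ f z)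
    (x w : ℕ → EuclideanSpace ℝ (Fin n)) (α : ℕ → ℝ) (d : ℕ → ℝ)
    -- `f` is semi-differentiable at every point of `Ω = {z | f(z) ≤ f(x_0)}`
    (hsemi : ∀ z, f z ≤ f (x 0) → ∀ u : EuclideanSpace ℝ (Fin n),
      Filter.Tendsto
        (fun q : ℝ × EuclideanSpace ℝ (Fin n) =>
          (((q.1)⁻¹ : ℝ) : EReal) * (f (z + q.1 • q.2) - f z))
        ((𝓝[>] (0:ℝ)) ×ˢ 𝓝 u) (𝓝 (subderiv f z u)))
    (L : ℝ) (hL : 0 < L)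
    -- descent property on the fattened sublevel set `Ω + B`
    (hdesc : DescentPropOn f
      ({z | f z ≤ f (x 0)} + Metric.closedBall (0 : EuclideanSpace ℝ (Fin n)) 1) L)
    (μ : ℝ) (hμ : μ ∈ Set.Ioo (0:ℝ) 1)
    (hw : ∀ k, ‖w k‖ ≤ 1)
    (hd : ∀ k, subderiv f (x k) (w k) = ((d k : ℝ) : EReal))
    (hdneg : ∀ k, d k < 0)
    (hupd : ∀ k, x (k + 1) = x k + α k • w k)
    -- each `α_k` is produced by Armijo backtracking with reduction multiple `μ`
    (harmijo : ∀ k,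
      (α k = 1 ∧ f (x k + α k • w k) - f (x k) < ((α k / 2 * d k : ℝ) : EReal)) ∨
      (α k < 1 ∧ 0 < α k ∧
        f (x k + α k • w k) - f (x k) < ((α k / 2 * d k : ℝ) : EReal) ∧
        ¬ (f (x k + (α k / μ) • w k) - f (x k) < ((α k / (2 * μ) * d k : ℝ) : EReal)))) :
    (∀ k, f (x k) ≤ f (x 0)) ∧
      ∀ N : ℕ, (∃ k ≤ N, min |d k| ((d k) ^ 2) < 1) →
        ∃ k ≤ N, |d k| ≤
          Real.sqrt (((f (x 0)).toReal - fstar) / (min (1/2) (μ / (2 * L)) * (N + 1))) := by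
  obtain ⟨hμ0, hμ1⟩ := hμ
  have hmemS : ∀ z : EuclideanSpace ℝ (Fin n), f z ≤ f (x 0) →
      ∀ b : EuclideanSpace ℝ (Fin n), ‖b‖ ≤ 1 →
      z + b ∈ ({z | f z ≤ f (x 0)} + Metric.closedBall (0 : EuclideanSpace ℝ (Fin n)) 1) := by
    intro z hz b hb
    exact Set.add_mem_add hz (by rwa [Metric.mem_closedBall, dist_zero_right])
  -- f (x 0) is finite
  have hx0top : f (x 0) ≠ ⊤ := by
    intro htop
    have h1 := hsemi (x 0) le_rfl (w 0)
    rw [hd 0] at h1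
    have hev : ∀ᶠ q : ℝ × EuclideanSpace ℝ (Fin n) in (𝓝[>] (0:ℝ)) ×ˢ 𝓝 (w 0),
        (fun q : ℝ × EuclideanSpace ℝ (Fin n) =>
          (((q.1)⁻¹ : ℝ) : EReal) * (f (x 0 + q.1 • q.2) - f (x 0))) q = (⊥ : EReal) := by
      filter_upwards [Filter.Eventually.prod_inl
        (eventually_mem_nhdsWithin (s := Set.Ioi (0:ℝ))) (𝓝 (w 0))] with q hq
      rw [htop, EReal.sub_top, EReal.coe_mul_bot_of_pos (by exact inv_pos.2 hq)]
    have h2 : Tendsto (fun _ : ℝ × EuclideanSpace ℝ (Fin n) => (⊥ : EReal))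
        ((𝓝[>] (0:ℝ)) ×ˢ 𝓝 (w 0)) (𝓝 ((d 0 : ℝ) : EReal)) := h1.congr' hev
    exact EReal.coe_ne_bot (d 0) (tendsto_nhds_unique h2 tendsto_const_nhds)
  set R : ℕ → ℝ := fun k => (f (x k)).toReal with hR
  have harm' : ∀ k, f (x k + α k • w k) - f (x k) < ((α k / 2 * d k : ℝ) : EReal) := by
    intro k
    rcases harmijo k with ⟨_, h⟩ | ⟨_, _, h, _⟩ <;> exact h
  have hαpos : ∀ k, 0 < α k := by
    intro k
    rcases harmijo k with ⟨h, _⟩ | ⟨_, h, _, _⟩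
    · rw [h]; exact one_pos
    · exact h
  have hαd : ∀ k, α k / 2 * d k < 0 := fun k =>
    mul_neg_of_pos_of_neg (div_pos (hαpos k) two_pos) (hdneg k)
  have hmem : ∀ k, f (x k) ≤ f (x 0) := by
    intro k; induction k with
    | zero => exact le_rfl
    | succ k ih =>
      have hk := harm' k
      have hfkne : f (x k) ≠ ⊤ := fun h => hx0top (top_le_iff.1 (h ▸ ih))
      have hfk : f (x k) = ((R k : ℝ) : EReal) := (EReal.coe_toReal hfkne (hf_ne_bot _)).symm
      rw [hupd k]
      rw [hfk] at hk
      obtain ⟨hne, hlt⟩ := ereal_lt_real (hf_ne_bot _) hk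
      calc f (x k + α k • w k)
          = (((f (x k + α k • w k)).toReal : ℝ) : EReal) :=
            (EReal.coe_toReal hne (hf_ne_bot _)).symm
        _ ≤ ((R k : ℝ) : EReal) := by
            rw [EReal.coe_le_coe_iff]; nlinarith [hαd k]
        _ = f (x k) := hfk.symm
        _ ≤ f (x 0) := ih
  have hfne : ∀ k, f (x k) ≠ ⊤ := fun k h => hx0top (top_le_iff.1 (h ▸ hmem k))
  have hfeq : ∀ k, f (x k) = ((R k : ℝ) : EReal) :=
    fun k => (EReal.coe_toReal (hfne k) (hf_ne_bot _)).symm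
  have hdec : ∀ k, R (k + 1) - R k < α k / 2 * d k := by
    intro k
    have hk := harm' k
    rw [← hupd k, hfeq k, hfeq (k + 1), ← EReal.coe_sub, EReal.coe_lt_coe_iff] at hk
    exact hk
  have hhom : ∀ k, ∀ s : ℝ, 0 < s →
      subderiv f (x k) (s • w k) = ((s * d k : ℝ) : EReal) := by
    intro k s hs
    have h1 := hsemi (x k) (hmem k) (w k)
    rw [hd k] at h1
    exact subderiv_smul f (x k) (w k) (d k) h1 hs (hsemi (x k) (hmem k) (s • w k))
  have hxS : ∀ k, x k ∈ ({z | f z ≤ f (x 0)}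
      + Metric.closedBall (0 : EuclideanSpace ℝ (Fin n)) 1) := by
    intro k
    have h := hmemS (x k) (hmem k) 0 (by simp)
    simpa using h
  have hdesc' : ∀ k, ∀ t : ℝ, 0 < t →
      (x k + t • w k) ∈ ({z | f z ≤ f (x 0)}
        + Metric.closedBall (0 : EuclideanSpace ℝ (Fin n)) 1) →
      f (x k + t • w k) ≤ ((R k + t * d k + L / 2 * ‖t • w k‖ ^ 2 : ℝ) : EReal) := by
    intro k t ht hyS
    have h := hdesc (x k) (hxS k) (x k + t • w k) hyS
    rw [add_sub_cancel_left, hhom k t ht, hfeq k] at h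
    refine h.trans_eq ?_
    norm_cast
  -- key step-size bound
  have hkey : ∀ k, α k = 1 ∨ μ * (-(d k)) ≤ L * α k := by
    intro k
    rcases harmijo k with ⟨h1, _⟩ | ⟨hα1, hα0, hpass, hfail⟩
    · exact Or.inl h1
    right
    set s : ℝ := α k / μ with hs_def
    have hs : 0 < s := div_pos hα0 hμ0
    by_contra hcon
    push_neg at hcon
    have hsm : s * μ = α k := by rw [hs_def]; field_simp
    have hLs : L * s < -(d k) := by
      have h' : (L * s) * μ < (-(d k)) * μ := by nlinarith [hcon, hsm]
      exact lt_of_mul_lt_mul_right h' hμ0.le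
    -- chain of points in the sublevel set
    have chain : ∀ j : ℕ, (j : ℝ) ≤ s → f (x k + (j : ℝ) • w k) ≤ f (x k) := by
      intro j
      induction j with
      | zero => intro _; simp
      | succ j ih =>
        intro hj1
        have hj1' : (j : ℝ) + 1 ≤ s := by push_cast at hj1; linarith
        have hj : (j : ℝ) ≤ s := by linarith
        have hzΩ : f (x k + (j : ℝ) • w k) ≤ f (x 0) := le_trans (ih hj) (hmem k)
        have hyS : x k + ((j : ℝ) + 1) • w k ∈ ({z | f z ≤ f (x 0)}
            + Metric.closedBall (0 : EuclideanSpace ℝ (Fin n)) 1) := by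
          have h := hmemS _ hzΩ (w k) (hw k)
          have heq : x k + (j : ℝ) • w k + w k = x k + ((j : ℝ) + 1) • w k := by
            rw [add_smul, one_smul, add_assoc]
          rwa [heq] at h
        have hb := hdesc' k ((j : ℝ) + 1) (by positivity) hyS
        have hnorm : ‖((j : ℝ) + 1) • w k‖ ^ 2 ≤ ((j : ℝ) + 1) ^ 2 := by
          have h1 : ‖((j : ℝ) + 1) • w k‖ ≤ (j : ℝ) + 1 := by
            rw [norm_smul, Real.norm_eq_abs, abs_of_nonneg (by positivity)]
            nlinarith [hw k, norm_nonneg (w k)]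
          nlinarith [norm_nonneg (((j : ℝ) + 1) • w k)]
        have hcast : ((j + 1 : ℕ) : ℝ) = (j : ℝ) + 1 := by push_cast; ring
        rw [hcast]
        refine le_trans hb ?_
        rw [hfeq k, EReal.coe_le_coe_iff]
        have hA : (0:ℝ) ≤ (j : ℝ) + 1 := by positivity
        have hB : L / 2 * ‖((j : ℝ) + 1) • w k‖ ^ 2 ≤ L / 2 * ((j : ℝ) + 1) ^ 2 := by
          have := hL.le
          nlinarith [hnorm]
        have hC : L * ((j : ℝ) + 1) ≤ L * s := mul_le_mul_of_nonneg_left hj1' hL.le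
        have hD : (0:ℝ) ≤ ((j : ℝ) + 1) * (-(d k) - L * ((j : ℝ) + 1)) :=
          mul_nonneg hA (by nlinarith [hC, hLs])
        have hF : (0:ℝ) ≤ L * ((j : ℝ) + 1) ^ 2 := by positivity
        nlinarith [hB, hD, hF]
    -- reach within distance 1 of s
    have hceil1 : 1 ≤ ⌈s⌉₊ := Nat.one_le_ceil_iff.2 hs
    set j0 : ℕ := ⌈s⌉₊ - 1 with hj0_def
    have hj0cast : (j0 : ℝ) = (⌈s⌉₊ : ℝ) - 1 := by
      rw [hj0_def, Nat.cast_sub hceil1, Nat.cast_one]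
    have hj0le : (j0 : ℝ) ≤ s := by
      have h := Nat.ceil_lt_add_one hs.le
      rw [hj0cast]; linarith
    have hsj0 : s - (j0 : ℝ) ≤ 1 := by
      have h := Nat.le_ceil s
      rw [hj0cast]; linarith
    have hsj0' : 0 ≤ s - (j0 : ℝ) := by linarith
    have hzΩ : f (x k + (j0 : ℝ) • w k) ≤ f (x 0) := le_trans (chain j0 hj0le) (hmem k)
    have hyS : x k + s • w k ∈ ({z | f z ≤ f (x 0)}
        + Metric.closedBall (0 : EuclideanSpace ℝ (Fin n)) 1) := by
      have h := hmemS _ hzΩ ((s - (j0 : ℝ)) • w k) ?_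
      · have heq : x k + (j0 : ℝ) • w k + (s - (j0 : ℝ)) • w k = x k + s • w k := by
          rw [add_assoc, ← add_smul]; ring_nf
        rwa [heq] at h
      · rw [norm_smul, Real.norm_eq_abs, abs_of_nonneg hsj0']
        nlinarith [hw k, norm_nonneg (w k)]
    have hb := hdesc' k s hs hyS
    have hy_ne_top : f (x k + s • w k) ≠ ⊤ := by
      intro h
      rw [h, top_le_iff] at hb
      exact EReal.coe_ne_top _ hb
    have hfy : f (x k + s • w k) = (((f (x k + s • w k)).toReal : ℝ) : EReal) :=
      (EReal.coe_toReal hy_ne_top (hf_ne_bot _)).symm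
    set ry : ℝ := (f (x k + s • w k)).toReal
    have hfail' : α k / (2 * μ) * d k ≤ ry - R k := by
      have h := not_lt.1 hfail
      rw [hfy, hfeq k, ← EReal.coe_sub, EReal.coe_le_coe_iff] at h
      exact h
    have hcoef : α k / (2 * μ) = s / 2 := by
      rw [hs_def]; ring
    have hub : ry ≤ R k + s * d k + L / 2 * ‖s • w k‖ ^ 2 := by
      rw [hfy, EReal.coe_le_coe_iff] at hb
      exact hb
    have hnorm : ‖s • w k‖ ^ 2 ≤ s ^ 2 := by
      have h1 : ‖s • w k‖ ≤ s := by
        rw [norm_smul, Real.norm_eq_abs, abs_of_pos hs]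
        nlinarith [hw k, norm_nonneg (w k)]
      nlinarith [norm_nonneg (s • w k)]
    rw [hcoef] at hfail'
    nlinarith [mul_pos hs (by linarith : (0:ℝ) < -(d k) - L * s)]
  -- conclusion
  refine ⟨hmem, ?_⟩
  intro N hex
  set M : ℝ := min (1/2 : ℝ) (μ / (2 * L)) with hM
  have hM0 : 0 < M := lt_min (by norm_num) (by positivity)
  obtain ⟨k₀, hk₀mem, hk₀min⟩ := Finset.exists_min_image (Finset.range (N + 1))
    (fun k => min |d k| ((d k) ^ 2)) ⟨0, Finset.mem_range.2 (Nat.succ_pos N)⟩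
  have hk₀N : k₀ ≤ N := Nat.lt_succ_iff.1 (Finset.mem_range.1 hk₀mem)
  obtain ⟨k1, hk1N, hk1⟩ := hex
  have hmin1 : min |d k₀| ((d k₀) ^ 2) < 1 :=
    lt_of_le_of_lt (hk₀min k1 (Finset.mem_range.2 (Nat.lt_succ_of_le hk1N))) hk1
  have habs : |d k₀| < 1 := by
    by_contra h
    push_neg at h
    have h2 : (1 : ℝ) ≤ (d k₀) ^ 2 := by nlinarith [abs_nonneg (d k₀), sq_abs (d k₀)]
    exact absurd hmin1 (not_lt.2 (le_min h h2))
  have hgk₀ : min |d k₀| ((d k₀) ^ 2) = (d k₀) ^ 2 :=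
    min_eq_right (by nlinarith [abs_nonneg (d k₀), sq_abs (d k₀)])
  have hper : ∀ k, k ≤ N → M * (d k₀) ^ 2 ≤ R k - R (k + 1) := by
    intro k hkN
    have hmink : (d k₀) ^ 2 ≤ min |d k| ((d k) ^ 2) :=
      hgk₀ ▸ hk₀min k (Finset.mem_range.2 (Nat.lt_succ_of_le hkN))
    have h1 : (d k₀) ^ 2 ≤ |d k| := le_trans hmink (min_le_left _ _)
    have h2 : (d k₀) ^ 2 ≤ (d k) ^ 2 := le_trans hmink (min_le_right _ _)
    have hdk := hdec k
    have habs' : -(d k) = |d k| := (abs_of_neg (hdneg k)).symm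
    rcases hkey k with h | h
    · have hM2 : M ≤ 1/2 := min_le_left _ _
      rw [h] at hdk
      nlinarith [sq_nonneg (d k₀)]
    · have hM2 : M ≤ μ / (2 * L) := min_le_right _ _
      have h3 : μ * (-(d k)) / L ≤ α k := by
        rw [div_le_iff₀ hL]
        linarith [h]
      have h4 : (μ * (-(d k)) / L / 2) * (-(d k)) ≤ (α k / 2) * (-(d k)) := by
        apply mul_le_mul_of_nonneg_right _ (by linarith [hdneg k])
        linarith
      have h5 : M * (d k₀) ^ 2 ≤ (μ / (2 * L)) * (d k) ^ 2 := by
        have := mul_le_mul hM2 h2 (sq_nonneg _) (by positivity)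
        linarith
      have h6 : (μ * (-(d k)) / L / 2) * (-(d k)) = (μ / (2 * L)) * (d k) ^ 2 := by
        field_simp
      nlinarith
  have htel : ∑ k ∈ Finset.range (N + 1), (R k - R (k + 1)) = R 0 - R (N + 1) :=
    Finset.sum_range_sub' R (N + 1)
  have hle : ∑ k ∈ Finset.range (N + 1), (M * (d k₀) ^ 2)
      ≤ ∑ k ∈ Finset.range (N + 1), (R k - R (k + 1)) :=
    Finset.sum_le_sum (fun k hk => hper k (Nat.lt_succ_iff.1 (Finset.mem_range.1 hk)))
  rw [htel, Finset.sum_const, Finset.card_range, nsmul_eq_mul] at hle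
  have hfl : fstar ≤ R (N + 1) := by
    have h := hbdd (x (N + 1))
    rw [hfeq (N + 1), EReal.coe_le_coe_iff] at h
    exact h
  have hsum : ((N : ℝ) + 1) * (M * (d k₀) ^ 2) ≤ R 0 - fstar := by
    push_cast at hle
    linarith
  refine ⟨k₀, hk₀N, ?_⟩
  have hdiv : (d k₀) ^ 2 ≤ (R 0 - fstar) / (M * ((N : ℝ) + 1)) := by
    rw [le_div_iff₀ (by positivity)]
    nlinarith [hsum]
  calc |d k₀| = Real.sqrt ((d k₀) ^ 2) := (Real.sqrt_sq_eq_abs _).symm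
    _ ≤ _ := Real.sqrt_le_sqrt (by rw [mul_comm M] at hdiv ⊢; exact hdiv)
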